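/- Let t₁, t₂, t₃, t₄ be the half-angle tangents of angles α₁,…,α₄ ∈ (−π, π) with Σαᵢ = 2π, and let s₂ = sin α₂, s₃ = sin α₃. Then −(t₃ + t₄)s₃ + (t₄ + t₁)·sin(α₁ + α₂) + (t₁ + t₂)s₂ = 0. -/

import Mathlib

lemma key_ident (s1 c1 s2 c2 s3 c3 s4 c4 : ℝ)
    (h1 : s1^2 + c1^2 = 1) (h2 : s2^2 + c2^2 = 1) (h3 : s3^2 + c3^2 = 1)
    (hE : (( (s1*c2+c1*s2)*c3 + (c1*c2-s1*s2)*s3 )*c4 + ( (c1*c2-s1*s2)*c3 - (s1*c2+c1*s2)*s3 )*s4) = 0) :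
    (-((s3*c4+s4*c3)*s3*c3*c1*c2) + (s4*c1+s1*c4)*(s1*c2+c1*s2)*(c1*c2-s1*s2)*c2*c3 + (s1*c2+s2*c1)*s2*c2*c3*c4) = 0 := by
  linear_combination ((-1)*s3*c3 + (1)*s2*c2 + (-1)*s2*c2*s3^2 + (1)*s2^2*s3*c3 + (1)*s1*c1 + (-1)*s1*c1*s3^2 + (1)*s1*c1*s2*c2*s3*c3 + (-1)*s1*c1*s2^2 + (1)*s1*c1*s2^2*s3^2 + (1)*s1^2*s3*c3 + (-1)*s1^2*s2*c2 + (1)*s1^2*s2*c2*s3^2 + (-1)*s1^2*s2^2*s3*c3) * hE + ((1)*c1*s2*c2^2*c3*s4 + (-1)*s1*c2*c3*s4 + (-1)*s1*c2*s3*c4 + (1)*s1*c2*s3^2*c3*s4 + (1)*s1*c2*s3^3*c4 + (1)*s1*c2^3*c3*s4 + (-1)*s1*s2*c3*c4 + (1)*s1*s2*s3*s4 + (1)*s1*s2*s3^2*c3*c4 + (-1)*s1*s2*s3^3*s4 + (1)*s1*s2*c2^2*c3*c4 + (-1)*s1*s2*c2^2*s3*c3^2*s4 + (-1)*s1*s2*c2^2*s3^2*c3*c4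 + (1)*s1*s2^2*c2*s3*c4 + (-1)*s1*s2^2*c2*s3*c3^2*c4 + (-1)*s1*s2^2*c2*s3^3*c4 + (1)*s1*s2^3*c3*c4 + (-1)*s1*s2^3*s3*s4 + (-1)*s1*s2^3*s3^2*c3*c4 + (1)*s1*s2^3*s3^3*s4) * h1 + ((-1)*c1*s2*s3*c4 + (1)*c1*s2*s3^2*c3*s4 + (1)*c1*s2*s3^3*c4 + (1)*s1*c2*c3*s4 + (1)*s1*s2*c3*c4 + (1)*s1*s2*s3*s4 + (-1)*s1*s2*s3*c3^2*s4 + (-1)*s1*s2*s3^3*s4 + (1)*s1^2*c1*c2*c3*c4 + (-1)*s1^2*c1*s2*c3*s4 + (1)*s1^2*c1*s2*s3*c4 + (-1)*s1^2*c1*s2*s3*c3^2*c4 + (-1)*s1^2*c1*s2*s3^3*c4 + (-1)*s1^3*c2*c3*s4 + (-1)*s1^3*s2*c3*c4 + (-1)*s1^3*s2*s3*s4 + (1)*s1^3*s2*s3*c3^2*s4 + (1)*s1^3*s2*s3^3*s4) * h2 + ((1)*c1*s2*s3*c4 + (-1)*c1*s2^2*c2*s3*s4 + (-1)*c1*s2^3*s3*c4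 + (1)*s1*c2*s3*c4 + (-2)*s1*s2*s3*s4 + (-2)*s1*s2^2*c2*s3*c4 + (2)*s1*s2^3*s3*s4 + (-1)*s1^2*c1*c2*s3*s4 + (-2)*s1^2*c1*s2*s3*c4 + (2)*s1^2*c1*s2^2*c2*s3*s4 + (2)*s1^2*c1*s2^3*s3*c4 + (-1)*s1^3*c2*s3*c4 + (2)*s1^3*s2*s3*s4 + (2)*s1^3*s2^2*c2*s3*c4 + (-2)*s1^3*s2^3*s3*s4) * h3


open Real

/-- Vanishing of the quantity `K` in the proof of Theorem 3 of the paper: for angles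
`α₁,…,α₄ ∈ (-π, π)` with `Σ αᵢ = 2π` and `tᵢ = tan(αᵢ/2)`,
`-(t₃ + t₄) sin α₃ + (t₄ + t₁) sin(α₁ + α₂) + (t₁ + t₂) sin α₂ = 0`. -/
theorem stmt16 (α₁ α₂ α₃ α₄ : ℝ)
    (h1 : α₁ ∈ Set.Ioo (-π) π) (h2 : α₂ ∈ Set.Ioo (-π) π)
    (h3 : α₃ ∈ Set.Ioo (-π) π) (h4 : α₄ ∈ Set.Ioo (-π) π)
    (hsum : α₁ + α₂ + α₃ + α₄ = 2 * π)
    (t₁ t₂ t₃ t₄ : ℝ)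
    (ht₁ : t₁ = Real.tan (α₁ / 2)) (ht₂ : t₂ = Real.tan (α₂ / 2))
    (ht₃ : t₃ = Real.tan (α₃ / 2)) (ht₄ : t₄ = Real.tan (α₄ / 2)) :
    -(t₃ + t₄) * Real.sin α₃ + (t₄ + t₁) * Real.sin (α₁ + α₂) +
      (t₁ + t₂) * Real.sin α₂ = 0 := by
  obtain ⟨h1l, h1r⟩ := h1
  obtain ⟨h2l, h2r⟩ := h2
  obtain ⟨h3l, h3r⟩ := h3
  obtain ⟨h4l, h4r⟩ := h4
  have hpi := Real.pi_pos
  have hc1 : Real.cos (α₁ / 2) > 0 := Real.cos_pos_of_mem_Ioo ⟨by linarith, by linarith⟩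
  have hc2 : Real.cos (α₂ / 2) > 0 := Real.cos_pos_of_mem_Ioo ⟨by linarith, by linarith⟩
  have hc3 : Real.cos (α₃ / 2) > 0 := Real.cos_pos_of_mem_Ioo ⟨by linarith, by linarith⟩
  have hc4 : Real.cos (α₄ / 2) > 0 := Real.cos_pos_of_mem_Ioo ⟨by linarith, by linarith⟩
  set s1 := Real.sin (α₁ / 2) with hs1d
  set c1 := Real.cos (α₁ / 2) with hc1d
  set s2 := Real.sin (α₂ / 2) with hs2d
  set c2 := Real.cos (α₂ / 2) with hc2d
  set s3 := Real.sin (α₃ / 2) with hs3d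
  set c3 := Real.cos (α₃ / 2) with hc3d
  set s4 := Real.sin (α₄ / 2) with hs4d
  set c4 := Real.cos (α₄ / 2) with hc4d
  have hp1 : s1^2 + c1^2 = 1 := Real.sin_sq_add_cos_sq _
  have hp2 : s2^2 + c2^2 = 1 := Real.sin_sq_add_cos_sq _
  have hp3 : s3^2 + c3^2 = 1 := Real.sin_sq_add_cos_sq _
  have hE0 : Real.sin (α₁ / 2 + α₂ / 2 + α₃ / 2 + α₄ / 2) = 0 := by
    have h : α₁ / 2 + α₂ / 2 + α₃ / 2 + α₄ / 2 = π := by linarith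
    rw [h, Real.sin_pi]
  have hE : (( (s1*c2+c1*s2)*c3 + (c1*c2-s1*s2)*s3 )*c4 + ( (c1*c2-s1*s2)*c3 - (s1*c2+c1*s2)*s3 )*s4) = 0 := by
    rw [← hE0]
    simp only [Real.sin_add, Real.cos_add]
    rfl
  have key := key_ident s1 c1 s2 c2 s3 c3 s4 c4 hp1 hp2 hp3 hE
  have hsin2 : Real.sin α₂ = 2 * s2 * c2 := by
    rw [hs2d, hc2d, ← Real.sin_two_mul]; congr 1; ring
  have hsin3 : Real.sin α₃ = 2 * s3 * c3 := by
    rw [hs3d, hc3d, ← Real.sin_two_mul]; congr 1; ring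
  have hsin12 : Real.sin (α₁ + α₂) = 2 * (s1*c2+c1*s2) * (c1*c2-s1*s2) := by
    rw [hs1d, hc1d, hs2d, hc2d, ← Real.sin_add, ← Real.cos_add, ← Real.sin_two_mul]
    congr 1; ring
  rw [ht₁, ht₂, ht₃, ht₄, Real.tan_eq_sin_div_cos, Real.tan_eq_sin_div_cos,
    Real.tan_eq_sin_div_cos, Real.tan_eq_sin_div_cos, hsin2, hsin3, hsin12,
    ← hs1d, ← hc1d, ← hs2d, ← hc2d, ← hs3d, ← hc3d, ← hs4d, ← hc4d]
  have hexp : -(s3 / c3 + s4 / c4) * (2 * s3 * c3) + (s4 / c4 + s1 / c1) * (2 * (s1*c2+c1*s2) * (c1*c2-s1*s2)) + (s1 / c1 + s2 / c2) * (2 * s2 * c2)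
      = 2 * (-((s3*c4+s4*c3)*s3*c3*c1*c2) + (s4*c1+s1*c4)*(s1*c2+c1*s2)*(c1*c2-s1*s2)*c2*c3 + (s1*c2+s2*c1)*s2*c2*c3*c4) / (c1*c2*c3*c4) := by
    field_simp
  rw [hexp, key]
  simp
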